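/- For any ε > 0 and δ ∈ (0,1) with ε ≤ 2 log(1/δ), setting λ = 1 + 2 log(1/δ)/ε and σ² ≥ 2(ε + 2 log(1/δ))/ε², the inequality λ/σ² + log(1/δ)/(λ − 1) ≤ ε holds. -/

import Mathlib

theorem rdp_conversion_inequality (ε δ σ lam : ℝ)
    (hε : 0 < ε) (hδ0 : 0 < δ) (hδ1 : δ < 1)
    (hεbound : ε ≤ 2 * Real.log (1 / δ))
    (hlam : lam = 1 + 2 * Real.log (1 / δ) / ε)
    (hσ : σ ^ 2 ≥ 2 * (ε + 2 * Real.log (1 / δ)) / ε ^ 2) :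
    lam / σ ^ 2 + Real.log (1 / δ) / (lam - 1) ≤ ε := by
  set L := Real.log (1 / δ) with hLdef
  have hL : 0 < L := Real.log_pos (by rw [lt_div_iff₀ hδ0]; linarith)
  have hden : 0 < 2 * (ε + 2 * L) / ε ^ 2 := by positivity
  have hσpos : 0 < σ ^ 2 := lt_of_lt_of_le hden hσ
  have hlampos : 0 ≤ lam := by
    rw [hlam]; positivity
  have h1 : lam / σ ^ 2 ≤ ε / 2 := by
    calc lam / σ ^ 2 ≤ lam / (2 * (ε + 2 * L) / ε ^ 2) :=
          div_le_div_of_nonneg_left hlampos hden hσ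
      _ = ε / 2 := by rw [hlam]; field_simp
  have h2 : L / (lam - 1) = ε / 2 := by
    rw [hlam]; field_simp; ring
  linarith
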